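/- Let A be an associative unital K-algebra and n a positive integer. For every associative unital K-algebra B there is a bijection Φ_B : Hom_{Alg_K}(A, Mₙ(B)) → Hom_{Alg_K}(ⁿ√A, B), defined as follows: given f : A → Mₙ(B), the universal property of the coproduct yields a K-algebra homomorphism F : A ∗ Mₙ(K) → Mₙ(B) with F∘ι_A = f and F∘ι_M equal to the canonical inclusion Mₙ(K) → Mₙ(B); F maps ⁿ√A into the centralizer of Mₙ(K) in Mₙ(B), which consists of the scalar matrices b·1ₙ and is identified with B, and Φ_B(f) : ⁿ√A → B is the resulting homomorphism. Moreover Φ is natural in B: for every K-algebra homomorphism h : B → B′ and every f : A → Mₙ(B), one has Φ_{B′}(Mₙ(h)∘f) = h∘Φ_B(f). -/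

import Mathlib

noncomputable section

universe u v

open Matrix

/-- The `n`-th root algebra `ⁿ√A`: the centralizer of `Mₙ(K)` in the free product
`A ∗ Mₙ(K)` (here presented by an algebra `P` with structure maps `ιA`, `ιM`). -/
def rootAlg {K : Type u} [Field K] {n : ℕ} {P : Type v} [Ring P] [Algebra K P]
    (ιM : Matrix (Fin n) (Fin n) K →ₐ[K] P) : Subalgebra K P :=
  Subalgebra.centralizer K (Set.range ⇑ιM)

section MatrixHelpers

variable {n : Type*} [Fintype n] [DecidableEq n] {B : Type*} [Semiring B]

theorem sum_diag_stdBasisMatrix : (∑ i : n, single i i (1 : B)) = 1 := by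
  ext a b
  simp [Matrix.sum_apply, single, Matrix.one_apply, ite_and, Finset.sum_ite_eq]

theorem conj_sum_stdBasisMatrix (M : Matrix n n B) (i j : n) :
    (∑ k : n, single k i (1 : B) * M * single j k (1 : B)) = M i j • 1 := by
  ext a b
  rw [Matrix.sum_apply]
  rcases eq_or_ne a b with rfl | hab
  · rw [Finset.sum_eq_single a]
    · simp
    · intro k _ hk
      exact Matrix.mul_single_apply_of_ne _ _ _ _ _ hk.symm _
    · simp
  · rw [Finset.sum_eq_zero, Matrix.smul_apply, Matrix.one_apply_ne hab, smul_zero]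
    intro k _
    rcases eq_or_ne b k with rfl | hbk
    · rw [mul_assoc]
      exact Matrix.single_mul_apply_of_ne _ _ _ _ _ hab _
    · exact Matrix.mul_single_apply_of_ne _ _ _ _ _ hbk _

omit [Fintype n] in
theorem map_one_stdBasisMatrix {B' : Type*} [Semiring B'] (φ : B →+* B') (i j : n) :
    (single i j (1 : B)).map φ = single i j (1 : B') := by
  ext a b
  simp only [Matrix.map_apply, single, of_apply, apply_ite φ, map_zero, φ.map_one]

end MatrixHelpers

section Root

variable {K : Type u} [Field K] {n : ℕ} {P : Type v} [Ring P] [Algebra K P]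
  (ιM : Matrix (Fin n) (Fin n) K →ₐ[K] P)

/-- the matrix units inside `P`. -/
def eMat (i j : Fin n) : P := ιM (single i j 1)

theorem eMat_mul (i j k l : Fin n) :
    eMat ιM i j * eMat ιM k l = if j = k then eMat ιM i l else 0 := by
  rw [eMat, eMat, ← _root_.map_mul]
  rcases eq_or_ne j k with rfl | h
  · rw [Matrix.single_mul_single_same, one_mul, if_pos rfl]
    rfl
  · rw [Matrix.single_mul_single_of_ne _ _ _ _ h, map_zero, if_neg h]

theorem sum_eMat : (∑ i : Fin n, eMat ιM i i) = 1 := by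
  simp only [eMat]
  rw [← map_sum, sum_diag_stdBasisMatrix, _root_.map_one]

/-- the "matrix entry" operators on `P`. -/
def pe (i j : Fin n) (p : P) : P := ∑ k : Fin n, eMat ιM k i * p * eMat ιM j k

theorem eMat_mul_pe (a b i j : Fin n) (p : P) :
    eMat ιM a b * pe ιM i j p = eMat ιM a i * p * eMat ιM j b := by
  rw [pe, Finset.mul_sum, Finset.sum_eq_single b]
  · rw [← mul_assoc, ← mul_assoc, eMat_mul, if_pos rfl]
  · intro k _ hk
    rw [← mul_assoc, ← mul_assoc, eMat_mul, if_neg hk.symm]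
    simp
  · simp
theorem pe_mul_eMat (a b i j : Fin n) (p : P) :
    pe ιM i j p * eMat ιM a b = eMat ιM a i * p * eMat ιM j b := by
  rw [pe, Finset.sum_mul, Finset.sum_eq_single a]
  · rw [mul_assoc, eMat_mul, if_pos rfl, mul_assoc]
  · intro k _ hk
    rw [mul_assoc, eMat_mul, if_neg hk]
    simp
  · simp

theorem pe_mem (i j : Fin n) (p : P) : pe ιM i j p ∈ rootAlg ιM := by
  rw [rootAlg, Subalgebra.mem_centralizer_iff]
  rintro _ ⟨N, rfl⟩
  have hN : ιM N = ∑ a : Fin n, ∑ b : Fin n, N a b • eMat ιM a b := by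
    conv_lhs => rw [matrix_eq_sum_single N]
    rw [map_sum]
    refine Finset.sum_congr rfl fun a _ => ?_
    rw [map_sum]
    refine Finset.sum_congr rfl fun b _ => ?_
    rw [eMat, ← _root_.map_smul, smul_single, smul_eq_mul, mul_one]
  rw [hN, Finset.sum_mul, Finset.mul_sum]
  refine Finset.sum_congr rfl fun a _ => ?_
  rw [Finset.sum_mul, Finset.mul_sum]
  refine Finset.sum_congr rfl fun b _ => ?_
  rw [smul_mul_assoc, mul_smul_comm, eMat_mul_pe, pe_mul_eMat]

theorem pe_mul (i j : Fin n) (x y : P) :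
    (∑ l : Fin n, pe ιM i l x * pe ιM l j y) = pe ιM i j (x * y) := by
  have h1 : ∀ l k : Fin n, (eMat ιM k i * x * eMat ιM l k) * pe ιM l j y
      = eMat ιM k i * x * (eMat ιM l l * y * eMat ιM j k) := by
    intro l k
    rw [mul_assoc (eMat ιM k i * x), eMat_mul_pe]
  calc (∑ l : Fin n, pe ιM i l x * pe ιM l j y)
      = ∑ l : Fin n, ∑ k : Fin n, eMat ιM k i * x * (eMat ιM l l * y * eMat ιM j k) := by
        refine Finset.sum_congr rfl fun l _ => ?_
        rw [pe, Finset.sum_mul]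
        exact Finset.sum_congr rfl fun k _ => h1 l k
    _ = ∑ k : Fin n, ∑ l : Fin n, eMat ιM k i * x * (eMat ιM l l * y * eMat ιM j k) :=
        Finset.sum_comm
    _ = pe ιM i j (x * y) := by
        rw [pe]
        refine Finset.sum_congr rfl fun k _ => ?_
        rw [← Finset.mul_sum]
        have : (∑ l : Fin n, eMat ιM l l * y * eMat ιM j k)
            = (∑ l : Fin n, eMat ιM l l) * y * eMat ιM j k := by
          rw [Finset.sum_mul, Finset.sum_mul]
        rw [this, sum_eMat, one_mul, ← mul_assoc, mul_assoc (eMat ιM k i)]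

theorem pe_one (i j : Fin n) : pe ιM i j 1 = if i = j then 1 else 0 := by
  rw [pe]
  rcases eq_or_ne i j with rfl | h
  · have h1 : ∀ k : Fin n, eMat ιM k i * 1 * eMat ιM i k = eMat ιM k k := by
      intro k
      rw [mul_one, eMat_mul]
      simp
    rw [if_pos rfl, Finset.sum_congr rfl (fun k _ => h1 k), sum_eMat]
  · rw [if_neg h, Finset.sum_eq_zero]
    intro k _
    rw [mul_one, eMat_mul, if_neg h]

theorem pe_iM (i j : Fin n) (N : Matrix (Fin n) (Fin n) K) :
    pe ιM i j (ιM N) = algebraMap K P (N i j) := by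
  have : pe ιM i j (ιM N) = ιM (∑ k : Fin n, single k i 1 * N * single j k 1) := by
    rw [map_sum, pe]
    exact Finset.sum_congr rfl fun k _ => by rw [eMat, eMat, _root_.map_mul, _root_.map_mul]
  rw [this, conj_sum_stdBasisMatrix, _root_.map_smul, _root_.map_one, Algebra.algebraMap_eq_smul_one]

theorem pe_root (i : Fin n) (r : P) (hr : r ∈ rootAlg ιM) : pe ιM i i r = r := by
  have h : ∀ k : Fin n, eMat ιM k i * r * eMat ιM i k = r * eMat ιM k k := by
    intro k
    rw [rootAlg, Subalgebra.mem_centralizer_iff] at hr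
    rw [hr (eMat ιM k i) ⟨_, rfl⟩, mul_assoc, eMat_mul, if_pos rfl]
  rw [pe, Finset.sum_congr rfl fun k _ => h k, ← Finset.mul_sum, sum_eMat, mul_one]

theorem pe_add (i j : Fin n) (x y : P) : pe ιM i j (x + y) = pe ιM i j x + pe ιM i j y := by
  simp [pe, mul_add, add_mul, Finset.sum_add_distrib]

theorem pe_smul (i j : Fin n) (c : K) (x : P) : pe ιM i j (c • x) = c • pe ιM i j x := by
  simp [pe, mul_smul_comm, smul_mul_assoc, Finset.smul_sum]

/-- `pe` packaged in the root algebra. -/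
def peR (i j : Fin n) (p : P) : rootAlg ιM := ⟨pe ιM i j p, pe_mem ιM i j p⟩

end Root

section Lift

variable {K : Type u} [Field K] {n : ℕ} {P : Type v} [Ring P] [Algebra K P]
  (ιM : Matrix (Fin n) (Fin n) K →ₐ[K] P)
  {B : Type v} [Ring B] [Algebra K B]

theorem peR_coe (i j : Fin n) (p : P) : (peR ιM i j p : P) = pe ιM i j p := rfl

theorem peR_one (i j : Fin n) : peR ιM i j 1 = if i = j then 1 else 0 := by
  apply Subtype.ext
  rw [peR_coe, pe_one]
  rcases eq_or_ne i j with rfl | h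
  · simp
  · simp [h]

theorem peR_zero (i j : Fin n) : peR ιM i j 0 = 0 := by
  apply Subtype.ext
  rw [peR_coe]
  simp [pe]

theorem peR_add (i j : Fin n) (x y : P) :
    peR ιM i j (x + y) = peR ιM i j x + peR ιM i j y := by
  apply Subtype.ext
  push_cast [peR_coe]
  exact pe_add ιM i j x y

theorem peR_mul (i j : Fin n) (x y : P) :
    peR ιM i j (x * y) = ∑ l : Fin n, peR ιM i l x * peR ιM l j y := by
  apply Subtype.ext
  push_cast [peR_coe]
  exact (pe_mul ιM i j x y).symm

theorem peR_iM (i j : Fin n) (N : Matrix (Fin n) (Fin n) K) :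
    peR ιM i j (ιM N) = algebraMap K (rootAlg ιM) (N i j) := by
  apply Subtype.ext
  rw [peR_coe, pe_iM]
  rfl

theorem peR_root (i : Fin n) (r : rootAlg ιM) : peR ιM i i (r : P) = r :=
  Subtype.ext (pe_root ιM i (r : P) r.2)

/-- the induced homomorphism `P → Mₙ(B)` coming from `g : ⁿ√A → B`. -/
def liftHom (g : rootAlg ιM →ₐ[K] B) : P →ₐ[K] Matrix (Fin n) (Fin n) B where
  toFun p := Matrix.of fun i j => g (peR ιM i j p)
  map_one' := by
    ext i j
    show g (peR ιM i j 1) = (1 : Matrix (Fin n) (Fin n) B) i j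
    rw [peR_one]
    rcases eq_or_ne i j with rfl | h
    · rw [if_pos rfl, _root_.map_one, Matrix.one_apply_eq]
    · rw [if_neg h, map_zero, Matrix.one_apply_ne h]
  map_mul' x y := by
    ext i j
    rw [Matrix.mul_apply]
    simp only [of_apply]
    rw [peR_mul, map_sum]
    exact Finset.sum_congr rfl fun l _ => by rw [_root_.map_mul]
  map_zero' := by
    ext i j
    show g (peR ιM i j 0) = (0 : Matrix (Fin n) (Fin n) B) i j
    rw [peR_zero, map_zero, Matrix.zero_apply]
  map_add' x y := by
    ext i j
    show g (peR ιM i j (x + y)) = (_ + _ : Matrix (Fin n) (Fin n) B) i j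
    rw [peR_add, map_add, Matrix.add_apply]
    rfl
  commutes' c := by
    ext i j
    show g (peR ιM i j (algebraMap K P c)) = algebraMap K (Matrix (Fin n) (Fin n) B) c i j
    have h1 : algebraMap K P c = ιM (algebraMap K (Matrix (Fin n) (Fin n) K) c) :=
      (ιM.commutes c).symm
    rw [h1, peR_iM, AlgHom.commutes, Matrix.algebraMap_matrix_apply,
      Matrix.algebraMap_matrix_apply, apply_ite (algebraMap K B), map_zero]
    simp

theorem liftHom_apply (g : rootAlg ιM →ₐ[K] B) (p : P) (i j : Fin n) :
    liftHom ιM g p i j = g (peR ιM i j p) := rfl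

theorem liftHom_comp_iM (g : rootAlg ιM →ₐ[K] B) :
    (liftHom ιM g).comp ιM = (Algebra.ofId K B).mapMatrix := by
  refine AlgHom.ext fun N => ?_
  ext i j
  rw [AlgHom.comp_apply, liftHom_apply, peR_iM, AlgHom.commutes,
    AlgHom.mapMatrix_apply, Matrix.map_apply, Algebra.ofId_apply]

end Lift

section Phi

variable {K : Type u} [Field K] {n : ℕ} {P : Type v} [Ring P] [Algebra K P]
  (ιM : Matrix (Fin n) (Fin n) K →ₐ[K] P)
  {B : Type v} [Ring B] [Algebra K B]

theorem F_eMat (F : P →ₐ[K] Matrix (Fin n) (Fin n) B)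
    (hM : F.comp ιM = (Algebra.ofId K B).mapMatrix) (a b : Fin n) :
    F (eMat ιM a b) = single a b (1 : B) := by
  rw [eMat, ← AlgHom.comp_apply, hM, AlgHom.mapMatrix_apply]
  exact map_one_stdBasisMatrix (algebraMap K B) a b

theorem exists_scalar (F : P →ₐ[K] Matrix (Fin n) (Fin n) B)
    (hM : F.comp ιM = (Algebra.ofId K B).mapMatrix) (r : rootAlg ιM) :
    ∃ b : B, F (r : P) = b • 1 := by
  have hc : ∀ i j : Fin n, Commute (single i j (1 : B)) (F (r : P)) := by
    intro i j
    have h1 : single i j (1 : B) = F (ιM (single i j 1)) :=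
      (F_eMat ιM F hM i j).symm
    have h2 : ιM (single i j 1) * (r : P) = (r : P) * ιM (single i j 1) :=
      (Subalgebra.mem_centralizer_iff K).mp r.2 _ ⟨_, rfl⟩
    rw [Commute, SemiconjBy, h1, ← _root_.map_mul, ← _root_.map_mul, h2]
  obtain ⟨b, hb⟩ := mem_range_scalar_of_commute_single (fun i j _ => hc i j)
  exact ⟨b, by rw [← hb, scalar_apply, ← smul_one_eq_diagonal]⟩

theorem scalar_mul_scalar (b c : B) :
    (b • (1 : Matrix (Fin n) (Fin n) B)) * (c • 1) = (b * c) • 1 := by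
  rw [smul_mul_assoc, one_mul, smul_smul]

theorem F_pe (F : P →ₐ[K] Matrix (Fin n) (Fin n) B)
    (hM : F.comp ιM = (Algebra.ofId K B).mapMatrix) (p : P) (i j : Fin n) :
    F (pe ιM i j p) = (F p) i j • 1 := by
  rw [pe, map_sum, ← conj_sum_stdBasisMatrix (F p) i j]
  refine Finset.sum_congr rfl fun k _ => ?_
  rw [_root_.map_mul, _root_.map_mul, F_eMat ιM F hM, F_eMat ιM F hM]

variable (hn : 0 < n)

/-- Given `F : P → Mₙ(B)` compatible with `ιM`, the induced map `ⁿ√A → B`. -/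
def PhiHom (F : P →ₐ[K] Matrix (Fin n) (Fin n) B)
    (hM : F.comp ιM = (Algebra.ofId K B).mapMatrix) : rootAlg ιM →ₐ[K] B where
  toFun r := F (r : P) ⟨0, hn⟩ ⟨0, hn⟩
  map_one' := by
    show F ((1 : rootAlg ιM) : P) ⟨0, hn⟩ ⟨0, hn⟩ = 1
    rw [OneMemClass.coe_one, _root_.map_one, Matrix.one_apply_eq]
  map_mul' r s := by
    obtain ⟨b, hb⟩ := exists_scalar ιM F hM r
    obtain ⟨c, hc⟩ := exists_scalar ιM F hM s
    show F ((r * s : rootAlg ιM) : P) ⟨0, hn⟩ ⟨0, hn⟩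
        = F (r : P) ⟨0, hn⟩ ⟨0, hn⟩ * F (s : P) ⟨0, hn⟩ ⟨0, hn⟩
    rw [MulMemClass.coe_mul, _root_.map_mul, hb, hc, scalar_mul_scalar]
    simp
  map_zero' := by
    show F ((0 : rootAlg ιM) : P) ⟨0, hn⟩ ⟨0, hn⟩ = 0
    rw [ZeroMemClass.coe_zero, map_zero, Matrix.zero_apply]
  map_add' r s := by
    show F ((r + s : rootAlg ιM) : P) ⟨0, hn⟩ ⟨0, hn⟩
        = F (r : P) ⟨0, hn⟩ ⟨0, hn⟩ + F (s : P) ⟨0, hn⟩ ⟨0, hn⟩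
    rw [AddMemClass.coe_add, map_add, Matrix.add_apply]
  commutes' c := by
    show F ((algebraMap K (rootAlg ιM) c : rootAlg ιM) : P) ⟨0, hn⟩ ⟨0, hn⟩ = algebraMap K B c
    rw [Subalgebra.coe_algebraMap, AlgHom.commutes, Matrix.algebraMap_matrix_apply, if_pos rfl]

theorem PhiHom_apply (F : P →ₐ[K] Matrix (Fin n) (Fin n) B)
    (hM : F.comp ιM = (Algebra.ofId K B).mapMatrix) (r : rootAlg ιM) :
    PhiHom ιM hn F hM r = F (r : P) ⟨0, hn⟩ ⟨0, hn⟩ := rfl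

theorem PhiHom_scalar (F : P →ₐ[K] Matrix (Fin n) (Fin n) B)
    (hM : F.comp ιM = (Algebra.ofId K B).mapMatrix) (r : rootAlg ιM) :
    F (r : P) = PhiHom ιM hn F hM r • 1 := by
  obtain ⟨b, hb⟩ := exists_scalar ιM F hM r
  have : PhiHom ιM hn F hM r = b := by
    rw [PhiHom_apply, hb]
    simp
  rw [this, hb]

end Phi

section Main

variable {K : Type u} [Field K] {A : Type v} [Ring A] [Algebra K A]
  {n : ℕ} {P : Type v} [Ring P] [Algebra K P]
  {ιA : A →ₐ[K] P} {ιM : Matrix (Fin n) (Fin n) K →ₐ[K] P}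
  (huniv : ∀ (C : Type v) [Ring C] [Algebra K C] (f : A →ₐ[K] C)
      (g : Matrix (Fin n) (Fin n) K →ₐ[K] C),
      ∃! h : P →ₐ[K] C, h.comp ιA = f ∧ h.comp ιM = g)
  {B : Type v} [Ring B] [Algebra K B]

def chooseF (f : A →ₐ[K] Matrix (Fin n) (Fin n) B) : P →ₐ[K] Matrix (Fin n) (Fin n) B :=
  (huniv (Matrix (Fin n) (Fin n) B) f ((Algebra.ofId K B).mapMatrix)).choose

theorem chooseF_A (f : A →ₐ[K] Matrix (Fin n) (Fin n) B) :
    (chooseF huniv f).comp ιA = f :=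
  (huniv (Matrix (Fin n) (Fin n) B) f ((Algebra.ofId K B).mapMatrix)).choose_spec.1.1

theorem chooseF_M (f : A →ₐ[K] Matrix (Fin n) (Fin n) B) :
    (chooseF huniv f).comp ιM = (Algebra.ofId K B).mapMatrix :=
  (huniv (Matrix (Fin n) (Fin n) B) f ((Algebra.ofId K B).mapMatrix)).choose_spec.1.2

theorem chooseF_unique (f : A →ₐ[K] Matrix (Fin n) (Fin n) B)
    (F : P →ₐ[K] Matrix (Fin n) (Fin n) B) (h1 : F.comp ιA = f)
    (h2 : F.comp ιM = (Algebra.ofId K B).mapMatrix) : F = chooseF huniv f :=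
  (huniv (Matrix (Fin n) (Fin n) B) f ((Algebra.ofId K B).mapMatrix)).choose_spec.2 F ⟨h1, h2⟩

variable (hn : 0 < n)

/-- the bijection `Φ_B`. -/
def PhiEquiv : (A →ₐ[K] Matrix (Fin n) (Fin n) B) ≃ (rootAlg ιM →ₐ[K] B) where
  toFun f := PhiHom ιM hn (chooseF huniv f) (chooseF_M huniv f)
  invFun g := (liftHom ιM g).comp ιA
  left_inv f := by
    refine AlgHom.ext fun a => ?_
    ext i j
    rw [AlgHom.comp_apply, liftHom_apply, PhiHom_apply, peR_coe,
      F_pe ιM _ (chooseF_M huniv f)]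
    have hfa : chooseF huniv f (ιA a) = f a := AlgHom.congr_fun (chooseF_A huniv f) a
    rw [hfa]
    simp
  right_inv g := by
    have hA : (liftHom ιM g).comp ιA = (liftHom ιM g).comp ιA := rfl
    have := chooseF_unique huniv ((liftHom ιM g).comp ιA) (liftHom ιM g) rfl
      (liftHom_comp_iM ιM g)
    refine AlgHom.ext fun r => ?_
    rw [PhiHom_apply, ← this, liftHom_apply, peR_root]

theorem PhiEquiv_natural {B' : Type v} [Ring B'] [Algebra K B'] (h : B →ₐ[K] B')
    (f : A →ₐ[K] Matrix (Fin n) (Fin n) B) :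
    PhiEquiv huniv hn ((AlgHom.mapMatrix h).comp f) = h.comp (PhiEquiv huniv hn f) := by
  have hM' : ((AlgHom.mapMatrix h).comp (chooseF huniv f)).comp ιM
      = (Algebra.ofId K B').mapMatrix := by
    rw [AlgHom.comp_assoc, chooseF_M huniv f]
    refine AlgHom.ext fun N => ?_
    ext i j
    rw [AlgHom.comp_apply, AlgHom.mapMatrix_apply, AlgHom.mapMatrix_apply,
      AlgHom.mapMatrix_apply, Matrix.map_apply, Matrix.map_apply, Matrix.map_apply,
      Algebra.ofId_apply, Algebra.ofId_apply, h.commutes]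
  have hA' : ((AlgHom.mapMatrix h).comp (chooseF huniv f)).comp ιA
      = (AlgHom.mapMatrix h).comp f := by
    rw [AlgHom.comp_assoc, chooseF_A huniv f]
  have hc := chooseF_unique huniv ((AlgHom.mapMatrix h).comp f) _ hA' hM'
  refine AlgHom.ext fun r => ?_
  simp only [PhiEquiv, Equiv.coe_fn_mk, AlgHom.comp_apply]
  rw [PhiHom_apply, PhiHom_apply, ← hc, AlgHom.comp_apply, AlgHom.mapMatrix_apply,
    Matrix.map_apply]

end Main

theorem scalar_iff {K : Type u} [Field K] {n : ℕ} (hn : 0 < n)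
    {B : Type v} [Ring B] [Algebra K B] (M : Matrix (Fin n) (Fin n) B) :
    (∀ N : Matrix (Fin n) (Fin n) K,
        M * (Algebra.ofId K B).mapMatrix N = (Algebra.ofId K B).mapMatrix N * M)
      ↔ ∃ b : B, M = b • (1 : Matrix (Fin n) (Fin n) B) := by
  constructor
  · intro h
    have hc : ∀ i j : Fin n, Commute (single i j (1 : B)) M := by
      intro i j
      have h1 : single i j (1 : B)
          = (Algebra.ofId K B).mapMatrix (single i j (1 : K)) := by
        rw [AlgHom.mapMatrix_apply]
        exact (map_one_stdBasisMatrix (algebraMap K B) i j).symm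
      rw [Commute, SemiconjBy, h1]
      exact (h (single i j 1)).symm
    obtain ⟨b, hb⟩ := mem_range_scalar_of_commute_single (fun i j _ => hc i j)
    exact ⟨b, by rw [← hb, scalar_apply, ← smul_one_eq_diagonal]⟩
  · rintro ⟨b, rfl⟩ N
    ext i j
    rw [Matrix.mul_apply, Matrix.mul_apply]
    have l : ∀ c : Fin n, (b • (1 : Matrix (Fin n) (Fin n) B)) i c
        * (Algebra.ofId K B).mapMatrix N c j
        = if c = i then b * algebraMap K B (N i j) else 0 := by
      intro c
      rcases eq_or_ne c i with rfl | hci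
      · rw [if_pos rfl, Matrix.smul_apply, Matrix.one_apply_eq, smul_eq_mul, mul_one,
          AlgHom.mapMatrix_apply, Matrix.map_apply, Algebra.ofId_apply]
      · rw [if_neg hci, Matrix.smul_apply, Matrix.one_apply_ne (Ne.symm hci), smul_zero,
          zero_mul]
    have r : ∀ c : Fin n, (Algebra.ofId K B).mapMatrix N i c
        * (b • (1 : Matrix (Fin n) (Fin n) B)) c j
        = if c = j then algebraMap K B (N i j) * b else 0 := by
      intro c
      rcases eq_or_ne c j with rfl | hcj
      · rw [if_pos rfl, Matrix.smul_apply, Matrix.one_apply_eq, smul_eq_mul, mul_one,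
          AlgHom.mapMatrix_apply, Matrix.map_apply, Algebra.ofId_apply]
      · rw [if_neg hcj, Matrix.smul_apply, Matrix.one_apply_ne hcj, smul_zero, mul_zero]
    rw [Finset.sum_congr rfl fun c _ => l c, Finset.sum_congr rfl fun c _ => r c,
      Finset.sum_ite_eq' Finset.univ i (fun _ => b * algebraMap K B (N i j)),
      Finset.sum_ite_eq' Finset.univ j (fun _ => algebraMap K B (N i j) * b),
      if_pos (Finset.mem_univ i), if_pos (Finset.mem_univ j)]
    exact (Algebra.commutes (N i j) b).symm

/-- Let `P = A ∗ Mₙ(K)` be the free product (presented by its universal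
property) and `ⁿ√A` the centralizer of `Mₙ(K)` in `P`. Then for every `K`-algebra `B`
there is a bijection `Φ_B : Hom(A, Mₙ(B)) ≃ Hom(ⁿ√A, B)`, characterized as follows: for
`f : A → Mₙ(B)`, the induced map `F : P → Mₙ(B)` (with `F∘ιA = f` and `F∘ιM` the
canonical inclusion `Mₙ(K) → Mₙ(B)`) sends each `r ∈ ⁿ√A` to the scalar matrix
`(Φ_B f r)·1ₙ` (the centralizer of `Mₙ(K)` in `Mₙ(B)` consisting exactly of the scalar
matrices `b·1ₙ`); moreover `Φ` is natural in `B`: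
`Φ_{B'}(Mₙ(h)∘f) = h∘Φ_B(f)` for every algebra map `h : B → B'`. -/
theorem statement_13 (K : Type u) [Field K] [CharZero K] (A : Type v) [Ring A] [Algebra K A]
    (n : ℕ) (hn : 0 < n)
    (P : Type v) [Ring P] [Algebra K P]
    (ιA : A →ₐ[K] P) (ιM : Matrix (Fin n) (Fin n) K →ₐ[K] P)
    (huniv : ∀ (C : Type v) [Ring C] [Algebra K C] (f : A →ₐ[K] C)
        (g : Matrix (Fin n) (Fin n) K →ₐ[K] C),
        ∃! h : P →ₐ[K] C, h.comp ιA = f ∧ h.comp ιM = g) :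
    ∃ Φ : ∀ (B : Type v) [Ring B] [Algebra K B],
        (A →ₐ[K] Matrix (Fin n) (Fin n) B) ≃ (↥(rootAlg ιM) →ₐ[K] B),
      (∀ (B : Type v) [Ring B] [Algebra K B],
        ∀ M : Matrix (Fin n) (Fin n) B,
          (∀ N : Matrix (Fin n) (Fin n) K,
              M * (Algebra.ofId K B).mapMatrix N = (Algebra.ofId K B).mapMatrix N * M)
            ↔ ∃ b : B, M = b • (1 : Matrix (Fin n) (Fin n) B))
      ∧ (∀ (B : Type v) [Ring B] [Algebra K B]
          (f : A →ₐ[K] Matrix (Fin n) (Fin n) B)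
          (F : P →ₐ[K] Matrix (Fin n) (Fin n) B),
          F.comp ιA = f →
          F.comp ιM = (Algebra.ofId K B).mapMatrix →
          ∀ r : ↥(rootAlg ιM),
            F (r : P) = (Φ B f r) • (1 : Matrix (Fin n) (Fin n) B))
      ∧ (∀ (B : Type v) [Ring B] [Algebra K B] (B' : Type v) [Ring B'] [Algebra K B']
          (h : B →ₐ[K] B') (f : A →ₐ[K] Matrix (Fin n) (Fin n) B),
          Φ B' ((AlgHom.mapMatrix h).comp f) = h.comp (Φ B f)) := by
  refine ⟨fun B _ _ => PhiEquiv huniv hn, fun B _ _ M => scalar_iff hn M, ?_, ?_⟩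
  · intro B _ _ f F h1 h2 r
    have hFc : F = chooseF huniv f := chooseF_unique huniv f F h1 h2
    have := PhiHom_scalar ιM hn (chooseF huniv f) (chooseF_M huniv f) r
    rw [hFc, this]
    rfl
  · intro B _ _ B' _ _ h f
    exact PhiEquiv_natural huniv hn h f
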